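/- The restriction map from G_n-invariant polynomial functions on R_n = (gl_n(C))^m to functions on the diagonal locus L_n = {(z,z,...,z) : z ∈ h} ≅ C^n is surjective onto the W_n-invariant polynomials, where W_n = S_n ⋉ (Z/mZ)^n. Specifically, the coefficients of the characteristic polynomial of x_m x_{m-1}···x_1 restrict to the elementary symmetric polynomials in z_1^m, ..., z_n^m. -/

import Mathlib

open MvPolynomial

/-- Telescoping product lemma. -/
lemma telescope_prod {M : Type*} [Monoid M] (a b x : ℕ → M)
    (hba : ∀ k, b k * a k = 1) (hab : ∀ k, a k * b k = 1) :
    ∀ l : ℕ, (List.ofFn fun k : Fin l => a (k + 1) * x k * b k).reverse.prod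
      = a l * (List.ofFn fun k : Fin l => x k).reverse.prod * b 0
  | 0 => by simpa using (hab 0).symm
  | (l + 1) => by
    rw [List.ofFn_succ' (f := fun k : Fin (l+1) => a (k + 1) * x k * b k),
      List.ofFn_succ' (f := fun k : Fin (l+1) => x k),
      List.concat_eq_append, List.concat_eq_append, List.reverse_append,
      List.reverse_append]
    simp only [List.reverse_cons, List.reverse_nil, List.nil_append, List.cons_append,
      List.prod_cons, Fin.val_last, Fin.coe_castSucc]
    rw [telescope_prod a b x hba hab l]
    simp only [← mul_assoc]
    rw [mul_assoc (a (l+1) * x l) (b l) (a l), hba l, mul_one]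

/-- Conjugation invariance of the characteristic polynomial. -/
lemma charpoly_units_conj' {R : Type*} [CommRing R] {n : Type*} [DecidableEq n] [Fintype n]
    (u : (Matrix n n R)ˣ) (M : Matrix n n R) :
    (((u⁻¹ : (Matrix n n R)ˣ) : Matrix n n R) * M * ((u : (Matrix n n R)ˣ) : Matrix n n R)).charpoly
      = M.charpoly := by
  let f : Matrix n n R →+* Matrix n n (Polynomial R) :=
    (Polynomial.C : R →+* Polynomial R).mapMatrix
  have key : Matrix.charmatrix ((↑u⁻¹ : Matrix n n R) * M * (↑u : Matrix n n R))
      = f ↑u⁻¹ * M.charmatrix * f ↑u := by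
    rw [Matrix.charmatrix, Matrix.charmatrix, mul_sub, sub_mul]
    congr 1
    · symm
      calc f ↑u⁻¹ * Matrix.scalar n Polynomial.X * f ↑u
          = Matrix.scalar n Polynomial.X * (f ↑u⁻¹ * f ↑u) := by
            rw [(Matrix.scalar_commute (n := n) Polynomial.X (Commute.all _) (f ↑u⁻¹)).eq.symm,
              mul_assoc]
        _ = Matrix.scalar n Polynomial.X := by
            rw [← map_mul, Units.inv_mul, map_one, mul_one]
    · show f ((↑u⁻¹ : Matrix n n R) * M * (↑u : Matrix n n R)) = _
      rw [map_mul, map_mul]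
  unfold Matrix.charpoly
  rw [key, Matrix.det_mul, Matrix.det_mul]
  have h1 : (f ↑u⁻¹).det * (f ↑u).det = 1 := by
    rw [← Matrix.det_mul, ← map_mul, Units.inv_mul, map_one, Matrix.det_one]
  calc (f ↑u⁻¹).det * M.charmatrix.det * (f ↑u).det
      = M.charmatrix.det * ((f ↑u⁻¹).det * (f ↑u).det) := by ring
    _ = M.charmatrix.det := by rw [h1, mul_one]

/-- charpoly of the reversed product of `m` copies of a diagonal matrix. -/
lemma diag_prod_charpoly (m n : ℕ) (z : Fin n → ℂ) :
    ((List.ofFn fun _ : Fin m => Matrix.diagonal z).reverse.prod).charpoly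
      = ∏ i, (Polynomial.X - Polynomial.C (z i ^ m)) := by
  rw [List.ofFn_const, List.reverse_replicate, List.prod_replicate, Matrix.diagonal_pow]
  rw [Matrix.charpoly_of_upperTriangular _ (Matrix.blockTriangular_diagonal _)]
  simp [Matrix.diagonal_apply_eq, Pi.pow_apply]

/-- Vieta for the coefficients. -/
lemma vieta_coeff {n : ℕ} (w : Fin n → ℂ) (k : Fin n) :
    (∏ i, (Polynomial.X - Polynomial.C (w i))).coeff (n - ((k : ℕ) + 1))
      = (-1) ^ ((k : ℕ) + 1) * Multiset.esymm (Finset.univ.val.map w) ((k : ℕ) + 1) := by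
  have hcard : Multiset.card (Finset.univ.val.map w) = n := by simp
  have h := Multiset.prod_X_sub_C_coeff (Finset.univ.val.map w)
    (k := n - ((k : ℕ) + 1)) (by rw [hcard]; exact Nat.sub_le _ _)
  rw [Multiset.map_map, hcard, Nat.sub_sub_self (Nat.succ_le_of_lt k.is_lt)] at h
  rw [Finset.prod_eq_multiset_prod]
  convert h using 3
  all_goals rfl

/-- The generic matrix product. -/
noncomputable def genProd (m n : ℕ) :
    Matrix (Fin n) (Fin n) (MvPolynomial (Fin m × Fin n × Fin n) ℂ) :=
  (List.ofFn fun k : Fin m =>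
    Matrix.of fun i j => (X (k, i, j) : MvPolynomial (Fin m × Fin n × Fin n) ℂ)).reverse.prod

lemma genProd_map (m n : ℕ) (pt : Fin m × Fin n × Fin n → ℂ) :
    (genProd m n).map (eval pt)
      = (List.ofFn fun k : Fin m => Matrix.of fun i j => pt (k, i, j)).reverse.prod := by
  rw [genProd, ← RingHom.mapMatrix_apply, map_list_prod, List.map_reverse, List.map_ofFn]
  have h : ((eval pt).mapMatrix ∘ fun k : Fin m =>
        (Matrix.of fun i j => (X (k, i, j) : MvPolynomial (Fin m × Fin n × Fin n) ℂ)))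
      = fun k : Fin m => Matrix.of fun i j => pt (k, i, j) := by
    funext k
    ext i j
    simp [RingHom.mapMatrix_apply, Matrix.map_apply]
  rw [h]

lemma eval_genProd_coeff (m n : ℕ) (pt : Fin m × Fin n × Fin n → ℂ) (j : ℕ) :
    eval pt ((genProd m n).charpoly.coeff j)
      = ((List.ofFn fun k : Fin m =>
          Matrix.of fun i j' => pt (k, i, j')).reverse.prod).charpoly.coeff j := by
  conv_rhs => rw [← genProd_map m n pt, Matrix.charpoly_map, Polynomial.coeff_map]

/-- Surjectivity of the Chevalley restriction map: every
`W_n`-invariant polynomial `q` in `z₁,…,z_n` is the restriction to the diagonal locus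
`L_n = {(diagonal z, …, diagonal z)}` of a `G_n`-invariant polynomial function on
`R_n = (gl_n ℂ)^m`.  Specifically, the characteristic polynomial of
`x_m ⋯ x₁` restricts on `L_n` to `∏ i (X - C (z i ^ m))`, whose coefficients are the
elementary symmetric polynomials in `z₁^m, …, z_n^m`. -/
theorem stmt_4 (m n : ℕ) [NeZero m] :
    (∀ q : MvPolynomial (Fin n) ℂ,
      (∀ (σ : Equiv.Perm (Fin n)) (a : Fin n → ℂ), (∀ i, a i ^ m = 1) →
        ∀ z : Fin n → ℂ, eval (fun i => a i * z (σ⁻¹ i)) q = eval z q) →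
      ∃ f : MvPolynomial (Fin m × Fin n × Fin n) ℂ,
        (∀ (g : Fin m → (Matrix (Fin n) (Fin n) ℂ)ˣ)
            (x : Fin m → Matrix (Fin n) (Fin n) ℂ),
          eval (fun p : Fin m × Fin n × Fin n =>
            ((g (p.1 + 1))⁻¹.val * x p.1 * (g p.1).val) p.2.1 p.2.2) f =
          eval (fun p : Fin m × Fin n × Fin n => x p.1 p.2.1 p.2.2) f) ∧
        (∀ z : Fin n → ℂ,
          eval (fun p : Fin m × Fin n × Fin n =>
            Matrix.diagonal z p.2.1 p.2.2) f = eval z q)) ∧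
    (∀ z : Fin n → ℂ,
      ((List.ofFn fun _ : Fin m => Matrix.diagonal z).reverse.prod).charpoly =
        ∏ i, (Polynomial.X - Polynomial.C (z i ^ m))) := by
  classical
  refine ⟨fun q hq => ?_, fun z => diag_prod_charpoly m n z⟩
  have hm : m ≠ 0 := NeZero.ne m
  obtain ⟨ζ, hζ⟩ : ∃ ζ : ℂ, IsPrimitiveRoot ζ m := ⟨_, Complex.isPrimitiveRoot_exp m hm⟩
  -- Step A: the polynomial identity coming from the invariance hypothesis
  have hpoly : ∀ a : Fin n → ℂ, (∀ i, a i ^ m = 1) →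
      aeval (fun j : Fin n => C (a j) * X j) q = q := by
    intro a ha
    apply MvPolynomial.funext
    intro z
    have h1 : eval z (aeval (fun j : Fin n => C (a j) * X j) q)
        = eval (fun i => a i * z i) q := by
      calc eval z (aeval (fun j : Fin n => C (a j) * X j) q)
          = aeval z (aeval (fun j : Fin n => C (a j) * X j) q) := rfl
        _ = aeval (fun i : Fin n => aeval z (C (a i) * X i)) q := comp_aeval_apply _ (aeval z) q
        _ = eval (fun i => a i * z i) q := by
            simp only [map_mul, aeval_C, aeval_X, Algebra.algebraMap_self, RingHom.id_apply]
            rfl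
    rw [h1]
    simpa using hq 1 a ha z
  -- coefficient scaling
  have hcoeff : ∀ (a : Fin n → ℂ) (d : Fin n →₀ ℕ),
      coeff d (aeval (fun j : Fin n => C (a j) * X j) q) = (∏ j, a j ^ d j) * coeff d q := by
    intro a d
    have hmono : ∀ e : Fin n →₀ ℕ,
        aeval (fun j : Fin n => C (a j) * X j) (monomial e (coeff e q))
          = monomial e ((∏ j, a j ^ e j) * coeff e q) := by
      intro e
      rw [aeval_monomial, monomial_eq, Finsupp.prod_pow, Finsupp.prod_pow]
      simp only [mul_pow, Finset.prod_mul_distrib, ← map_pow, ← map_prod, algebraMap_eq]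
      rw [C_mul]
      ring
    conv_lhs => rw [q.as_sum, map_sum]
    rw [Finset.sum_congr rfl fun e _ => hmono e, MvPolynomial.coeff_sum]
    simp_rw [coeff_monomial]
    rw [Finset.sum_ite_eq']
    by_cases hd : d ∈ q.support
    · rw [if_pos hd]
    · rw [if_neg hd, MvPolynomial.notMem_support_iff.mp hd, mul_zero]
  -- divisibility of exponents
  have hdvd : ∀ d ∈ q.support, ∀ i : Fin n, m ∣ d i := by
    intro d hd i0
    set a : Fin n → ℂ := fun j => if j = i0 then ζ else 1 with ha_def
    have ha : ∀ j, a j ^ m = 1 := by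
      intro j; by_cases hj : j = i0 <;> simp [a, hj, hζ.pow_eq_one]
    have h1 := congrArg (coeff d) (hpoly a ha)
    rw [hcoeff a d] at h1
    have h3 : (∏ j, a j ^ d j) = ζ ^ d i0 := by
      rw [Finset.prod_congr rfl (fun j _ => show a j ^ d j = if j = i0 then ζ ^ d i0 else 1 by
        by_cases hj : j = i0 <;> simp [a, hj])]
      simp [Finset.prod_ite_eq']
    rw [h3] at h1
    have hc0 : coeff d q ≠ 0 := mem_support_iff.mp hd
    have h4 : ζ ^ d i0 = 1 := mul_right_cancel₀ hc0 (h1.trans (one_mul (coeff d q)).symm)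
    exact (hζ.pow_eq_one_iff_dvd _).mp h4
  -- Step B: the polynomial r with q(z) = r(z^m)
  set r : MvPolynomial (Fin n) ℂ :=
    ∑ d ∈ q.support, monomial (Finsupp.mapRange (· / m) (Nat.zero_div _) d) (coeff d q)
    with hrdef
  have hr : ∀ w : Fin n → ℂ, eval (fun i => w i ^ m) r = eval w q := by
    intro w
    rw [hrdef, map_sum]
    conv_rhs => rw [q.as_sum, map_sum]
    refine Finset.sum_congr rfl fun d hd => ?_
    rw [eval_monomial, eval_monomial]
    congr 1
    rw [Finsupp.prod_pow, Finsupp.prod_pow]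
    refine Finset.prod_congr rfl fun i _ => ?_
    rw [Finsupp.mapRange_apply, ← pow_mul, Nat.mul_div_cancel' (hdvd d hd i)]
  have hrsym : r.IsSymmetric := by
    intro e
    apply MvPolynomial.funext
    intro z
    choose y hy using fun i => IsAlgClosed.exists_pow_nat_eq (z i) (Nat.pos_of_ne_zero hm)
    calc eval z (rename (⇑e) r) = eval (z ∘ e) r := by rw [eval_rename]
      _ = eval (fun i => y (e i) ^ m) r := by
          rw [show (z ∘ ⇑e) = fun i => y (e i) ^ m from funext fun i => (hy (e i)).symm]
      _ = eval (fun i => y (e i)) q := hr _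
      _ = eval y q := by simpa using hq e⁻¹ (fun _ => 1) (fun _ => one_pow m) y
      _ = eval (fun i => y i ^ m) r := (hr y).symm
      _ = eval z r := by
          rw [show (fun i => y i ^ m) = z from funext fun i => hy i]
  -- Step C: fundamental theorem of symmetric polynomials
  obtain ⟨P, hP⟩ := esymmAlgHom_surjective (σ := Fin n) (R := ℂ) (n := n)
    (by simp) ⟨r, hrsym⟩
  have hPr : aeval (fun i : Fin n => esymm (Fin n) ℂ (i + 1)) P = r := by
    have h := congrArg Subtype.val hP
    rwa [esymmAlgHom_apply] at h
  -- Step D: the invariant polynomial f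
  set s : Fin n → MvPolynomial (Fin m × Fin n × Fin n) ℂ :=
    fun k => C ((-1 : ℂ) ^ ((k : ℕ) + 1)) * (genProd m n).charpoly.coeff (n - ((k : ℕ) + 1))
    with hsdef
  have heval : ∀ pt : Fin m × Fin n × Fin n → ℂ,
      eval pt (aeval s P) = eval (fun k : Fin n => (-1 : ℂ) ^ ((k : ℕ) + 1) *
        ((List.ofFn fun k' : Fin m =>
          Matrix.of fun i j => pt (k', i, j)).reverse.prod).charpoly.coeff
            (n - ((k : ℕ) + 1))) P := by
    intro pt
    calc eval pt (aeval s P) = aeval pt (aeval s P) := rfl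
      _ = aeval (fun k : Fin n => aeval pt (s k)) P := comp_aeval_apply _ (aeval pt) P
      _ = eval (fun k : Fin n => eval pt (s k)) P := rfl
      _ = _ := by
          have h : (fun k : Fin n => eval pt (s k))
              = fun k : Fin n => (-1 : ℂ) ^ ((k : ℕ) + 1) *
                ((List.ofFn fun k' : Fin m =>
                  Matrix.of fun i j => pt (k', i, j)).reverse.prod).charpoly.coeff
                    (n - ((k : ℕ) + 1)) := by
            funext k
            rw [hsdef]
            rw [map_mul, eval_C, eval_genProd_coeff]
          rw [h]
  refine ⟨aeval s P, ?_, ?_⟩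
  · -- invariance
    intro g x
    rw [heval, heval]
    open Fin.NatCast in
    have hconj : (List.ofFn fun k' : Fin m =>
          (Matrix.of fun i j =>
            (((g (k' + 1))⁻¹ : (Matrix (Fin n) (Fin n) ℂ)ˣ).val * x k' * (g k').val) i j :
            Matrix (Fin n) (Fin n) ℂ)).reverse.prod
        = ((g 0)⁻¹ : (Matrix (Fin n) (Fin n) ℂ)ˣ).val
          * (List.ofFn fun k' : Fin m =>
              (Matrix.of fun i j => x k' i j : Matrix (Fin n) (Fin n) ℂ)).reverse.prod
          * ((g 0) : (Matrix (Fin n) (Fin n) ℂ)ˣ).val := by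
      have h1 : (List.ofFn fun k' : Fin m =>
            (Matrix.of fun i j =>
              (((g (k' + 1))⁻¹ : (Matrix (Fin n) (Fin n) ℂ)ˣ).val * x k' * (g k').val) i j :
              Matrix (Fin n) (Fin n) ℂ))
          = List.ofFn fun k' : Fin m =>
              (fun j : ℕ => ((g ((j : Fin m)))⁻¹ : (Matrix (Fin n) (Fin n) ℂ)ˣ).val)
                ((k' : ℕ) + 1)
              * (fun j : ℕ => x ((j : Fin m))) (k' : ℕ)
              * (fun j : ℕ => ((g ((j : Fin m))) : (Matrix (Fin n) (Fin n) ℂ)ˣ).val) (k' : ℕ) := by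
        refine congrArg List.ofFn (funext fun k' => ?_)
        show (((g (k' + 1))⁻¹ : (Matrix (Fin n) (Fin n) ℂ)ˣ).val * x k' * (g k').val)
            = ((g ((((k' : ℕ) + 1 : ℕ) : Fin m)))⁻¹).val * x (((k' : ℕ) : Fin m))
              * (g (((k' : ℕ) : Fin m))).val
        rw [show ((((k' : ℕ) + 1 : ℕ)) : Fin m) = k' + 1 by
            push_cast [Fin.cast_val_eq_self]; ring,
          Fin.cast_val_eq_self]
      rw [h1, telescope_prod
        (fun j : ℕ => ((g ((j : Fin m)))⁻¹ : (Matrix (Fin n) (Fin n) ℂ)ˣ).val)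
        (fun j : ℕ => ((g ((j : Fin m))) : (Matrix (Fin n) (Fin n) ℂ)ˣ).val)
        (fun j : ℕ => x ((j : Fin m)))
        (fun j => Units.mul_inv _) (fun j => Units.inv_mul _) m]
      have hof : ∀ k' : Fin m, (Matrix.of fun i j => x k' i j) = x k' := fun _ => rfl
      simp [Fin.natCast_self, Fin.cast_val_eq_self, hof]
    have h2 : (fun k : Fin n => (-1 : ℂ) ^ ((k : ℕ) + 1) *
          ((List.ofFn fun k' : Fin m =>
            Matrix.of fun i j =>
              (((g (k' + 1))⁻¹ : (Matrix (Fin n) (Fin n) ℂ)ˣ).val * x k' * (g k').val) i j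
            ).reverse.prod).charpoly.coeff (n - ((k : ℕ) + 1)))
        = (fun k : Fin n => (-1 : ℂ) ^ ((k : ℕ) + 1) *
          ((List.ofFn fun k' : Fin m =>
            Matrix.of fun i j => x k' i j).reverse.prod).charpoly.coeff
              (n - ((k : ℕ) + 1))) := by
      funext k
      rw [hconj, charpoly_units_conj']
    exact congrArg (fun f => eval f P) h2
  · -- restriction to the diagonal
    intro z
    rw [heval]
    have hD : ((List.ofFn fun _ : Fin m =>
          (Matrix.of fun i j => Matrix.diagonal z i j :
            Matrix (Fin n) (Fin n) ℂ)).reverse.prod).charpoly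
        = ∏ i, (Polynomial.X - Polynomial.C (z i ^ m)) := diag_prod_charpoly m n z
    have h2 : (fun k : Fin n => (-1 : ℂ) ^ ((k : ℕ) + 1) *
          ((List.ofFn fun k' : Fin m =>
            Matrix.of fun i j => Matrix.diagonal z i j).reverse.prod).charpoly.coeff
              (n - ((k : ℕ) + 1)))
        = (fun k : Fin n =>
            Multiset.esymm (Finset.univ.val.map fun i => z i ^ m) ((k : ℕ) + 1)) := by
      funext k
      rw [hD, vieta_coeff (fun i => z i ^ m) k, ← mul_assoc, ← mul_pow]
      norm_num
    rw [h2]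
    calc eval (fun k : Fin n =>
            Multiset.esymm (Finset.univ.val.map fun i => z i ^ m) ((k : ℕ) + 1)) P
        = eval (fun i => z i ^ m) (aeval (fun i : Fin n => esymm (Fin n) ℂ (i + 1)) P) := by
          symm
          calc eval (fun i => z i ^ m) (aeval (fun i : Fin n => esymm (Fin n) ℂ (i + 1)) P)
              = aeval (fun i => z i ^ m) (aeval (fun i : Fin n => esymm (Fin n) ℂ (i + 1)) P) := rfl
            _ = aeval (fun k : Fin n =>
                  aeval (fun i => z i ^ m) (esymm (Fin n) ℂ ((k : ℕ) + 1))) P :=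
                comp_aeval_apply _ (aeval fun i => z i ^ m) P
            _ = _ := by
                have h : (fun k : Fin n =>
                      aeval (fun i => z i ^ m) (esymm (Fin n) ℂ ((k : ℕ) + 1)))
                    = fun k : Fin n =>
                        Multiset.esymm (Finset.univ.val.map fun i => z i ^ m) ((k : ℕ) + 1) := by
                  funext k
                  exact aeval_esymm_eq_multiset_esymm (Fin n) ℂ _ _
                rw [h]
                rfl
      _ = eval (fun i => z i ^ m) r := by rw [hPr]
      _ = eval z q := hr z
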